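/- The set of symmetric unitary matrices coincides with the set of matrices of the form W Wᵗ with W unitary: every N×N unitary symmetric matrix U admits a factorization U = W Wᵗ for some W ∈ U(N), and conversely every matrix of the form W Wᵗ with W unitary is unitary and symmetric. -/

import Mathlib

open Matrix Polynomial Module.End

open scoped ComplexInnerProductSpace

/-- `Matrix.toEuclideanLin` as an algebra homomorphism. -/
noncomputable def toEucAlg (N : ℕ) :
    Matrix (Fin N) (Fin N) ℂ →ₐ[ℂ]
      (EuclideanSpace ℂ (Fin N) →ₗ[ℂ] EuclideanSpace ℂ (Fin N)) :=
  AlgHom.ofLinearMap (Matrix.toEuclideanLin (𝕜 := ℂ)).toLinearMap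
    (by
      refine LinearMap.ext fun v => ?_
      simp [Matrix.toEuclideanLin_apply])
    (by
      intro x y
      refine LinearMap.ext fun v => ?_
      simp [Matrix.toEuclideanLin_apply, Matrix.mulVec_mulVec, Module.End.mul_apply])

@[simp] lemma toEucAlg_apply (N : ℕ) (M : Matrix (Fin N) (Fin N) ℂ) :
    toEucAlg N M = Matrix.toEuclideanLin M := rfl

lemma transpose_aeval (N : ℕ) (M : Matrix (Fin N) (Fin N) ℂ) (p : ℂ[X]) :
    (Polynomial.aeval M p)ᵀ = Polynomial.aeval Mᵀ p := by
  induction p using Polynomial.induction_on' with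
  | add p q hp hq => simp [hp, hq]
  | monomial k a =>
      rw [Polynomial.aeval_monomial, Polynomial.aeval_monomial,
        Algebra.algebraMap_eq_smul_one]
      simp [Matrix.transpose_smul, Matrix.transpose_mul, Matrix.transpose_pow,
        smul_mul_assoc, mul_smul_comm, one_mul, mul_one]

/-- A matrix is symmetric and unitary if and only if it has the form `W Wᵀ` with `W`
unitary: every symmetric unitary `U` factorizes as `U = W Wᵀ` with `W ∈ U(N)`, and
conversely every `W Wᵀ` with `W` unitary is symmetric and unitary. -/
theorem symmetric_unitary_iff_WWt (N : ℕ) (U : Matrix (Fin N) (Fin N) ℂ) :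
    (Uᴴ * U = 1 ∧ U = Uᵀ) ↔
      ∃ W : Matrix (Fin N) (Fin N) ℂ, Wᴴ * W = 1 ∧ U = W * Wᵀ := by
  constructor
  · rintro ⟨h1, hsym⟩
    have h2 : U * Uᴴ = 1 := mul_eq_one_comm.mp h1
    set A : Matrix (Fin N) (Fin N) ℂ := (2⁻¹ : ℂ) • (U + Uᴴ) with hA
    set B : Matrix (Fin N) (Fin N) ℂ := (-Complex.I / 2) • (U - Uᴴ) with hB
    have hAH : A.IsHermitian := by
      show Aᴴ = A
      rw [hA, conjTranspose_smul, conjTranspose_add, conjTranspose_conjTranspose]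
      have hs : (star (2⁻¹ : ℂ)) = 2⁻¹ := by simp
      rw [hs, add_comm]
    have hBH : B.IsHermitian := by
      show Bᴴ = B
      rw [hB, conjTranspose_smul, conjTranspose_sub, conjTranspose_conjTranspose]
      have h3 : star (-Complex.I / 2) = Complex.I / 2 := by
        simp [Complex.star_def, map_div₀]
      rw [h3]
      module
    set E := EuclideanSpace ℂ (Fin N)
    set a : E →ₗ[ℂ] E := toEucAlg N A with ha'
    set b : E →ₗ[ℂ] E := toEucAlg N B with hb'
    set t : E →ₗ[ℂ] E := toEucAlg N U with ht'
    have ha : LinearMap.IsSymmetric a := Matrix.isHermitian_iff_isSymmetric.mp hAH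
    have hb : LinearMap.IsSymmetric b := Matrix.isHermitian_iff_isSymmetric.mp hBH
    have e1 : (U + Uᴴ) * (U - Uᴴ) = U * U - Uᴴ * Uᴴ := by
      rw [add_mul, mul_sub, mul_sub, h1, h2]
      abel
    have e2 : (U - Uᴴ) * (U + Uᴴ) = U * U - Uᴴ * Uᴴ := by
      rw [sub_mul, mul_add, mul_add, h1, h2]
      abel
    have hABc : A * B = B * A := by
      rw [hA, hB, smul_mul_assoc, smul_mul_assoc, mul_smul_comm, mul_smul_comm,
        smul_smul, smul_smul, e1, e2, mul_comm]
    have hab : Commute a b := by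
      show a * b = b * a
      rw [ha', hb', ← _root_.map_mul, ← _root_.map_mul, hABc]
    have hsum := ha.iSup_iSup_eigenspace_inf_eigenspace_eq_top_of_commute hb hab
    set V : ℂ × ℂ → Submodule ℂ E := fun i => eigenspace a i.2 ⊓ eigenspace b i.1 with hV
    have horth := LinearMap.IsSymmetric.orthogonalFamily_eigenspace_inf_eigenspace ha hb
    have hsupV : (⨆ i : ℂ × ℂ, V i) = ⊤ := by
      rw [hV, iSup_prod, iSup_comm]
      exact hsum
    set lam : ℂ × ℂ → ℂ := fun i => i.2 + Complex.I * i.1 with hlam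
    have hUAB : U = A + Complex.I • B := by
      rw [hA, hB, smul_smul]
      have hIc : Complex.I * (-Complex.I / 2) = 2⁻¹ := by
        have hI := Complex.I_mul_I
        linear_combination (-1/2 : ℂ) * hI
      rw [hIc]
      module
    have htab : t = a + Complex.I • b := by
      rw [ht', ha', hb', ← _root_.map_smul, ← _root_.map_add, ← hUAB]
    have heig : ∀ i x, x ∈ V i → t x = lam i • x := by
      rintro ⟨c, d⟩ x hx
      rw [Submodule.mem_inf] at hx
      obtain ⟨hxa, hxb⟩ := hx
      rw [mem_eigenspace_iff] at hxa hxb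
      rw [htab]
      simp only [LinearMap.add_apply, LinearMap.smul_apply, hxa, hxb, hlam]
      rw [smul_smul, add_smul]
    have hinner_t : ∀ x y : E, ⟪t x, t y⟫ = ⟪x, y⟫ := by
      intro x y
      have hadj : ⟪(LinearMap.adjoint t) (t x), y⟫ = ⟪t x, t y⟫ :=
        LinearMap.adjoint_inner_left t y (t x)
      rw [← hadj]
      have hid : (LinearMap.adjoint t) (t x) = x := by
        rw [ht', toEucAlg_apply, ← Matrix.toEuclideanLin_conjTranspose_eq_adjoint]
        show toEucAlg N Uᴴ (toEucAlg N U x) = x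
        rw [← Module.End.mul_apply, ← _root_.map_mul, h1, _root_.map_one, Module.End.one_apply]
      rw [hid]
    have habs : ∀ i (x : E), x ∈ V i → x ≠ 0 →
        (starRingEnd ℂ) (lam i) * lam i = 1 := by
      intro i x hx hx0
      have h := hinner_t x x
      rw [heig i x hx, inner_smul_left, inner_smul_right] at h
      have hxx : ⟪x, x⟫ ≠ 0 := inner_self_ne_zero.mpr hx0
      have h' : ((starRingEnd ℂ) (lam i) * lam i) * ⟪x, x⟫ = 1 * ⟪x, x⟫ := by
        rw [one_mul, mul_assoc]
        exact h
      exact mul_right_cancel₀ hxx h'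
    have habs1 : ∀ i (x : E), x ∈ V i → x ≠ 0 → ‖lam i‖ = 1 := by
      intro i x hx hx0
      have h := habs i x hx hx0
      have hn : (Complex.normSq (lam i) : ℂ) = 1 := by
        rw [Complex.normSq_eq_conj_mul_self, h]
      have hn' : Complex.normSq (lam i) = 1 := by exact_mod_cast hn
      have hs := Complex.sq_norm (lam i)
      nlinarith [norm_nonneg (lam i)]
    set sq : ℂ → ℂ := fun z => Complex.exp (Complex.log z / 2) with hsq
    have hsq2 : ∀ z : ℂ, z ≠ 0 → sq z * sq z = z := by
      intro z hz
      rw [hsq]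
      simp only
      rw [← Complex.exp_add, add_halves, Complex.exp_log hz]
    have hsqu : ∀ z : ℂ, ‖z‖ = 1 → (starRingEnd ℂ) (sq z) * sq z = 1 := by
      intro z hz
      rw [hsq]
      simp only
      rw [← Complex.exp_conj, ← Complex.exp_add]
      have : (starRingEnd ℂ) (Complex.log z / 2) + Complex.log z / 2
          = ((Complex.log z).re : ℂ) := by
        rw [map_div₀]
        have h4 : (starRingEnd ℂ) (2 : ℂ) = 2 := map_ofNat _ 2
        rw [h4, ← add_div, add_comm, Complex.add_conj]
        push_cast
        ring
      rw [this, Complex.log_re, hz, Real.log_one, Complex.ofReal_zero, Complex.exp_zero]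
    set nodes : Finset ℂ := (finite_hasEigenvalue (f := t)).toFinset with hnodes
    set p : ℂ[X] := Lagrange.interpolate nodes id sq with hp
    have hpeval : ∀ μ : ℂ, HasEigenvalue t μ → p.eval μ = sq μ := by
      intro μ hμ
      have hmem : μ ∈ nodes := by
        rw [hnodes, Set.Finite.mem_toFinset]
        exact hμ
      exact Lagrange.eval_interpolate_at_node sq (Set.injOn_id _) hmem
    set W : Matrix (Fin N) (Fin N) ℂ := Polynomial.aeval U p with hW
    set S : E →ₗ[ℂ] E := toEucAlg N W with hS'
    have hSt : S = Polynomial.aeval t p := by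
      rw [hS', hW, ht', Polynomial.aeval_algHom_apply]
    have hSact : ∀ i x, x ∈ V i → x ≠ 0 → S x = sq (lam i) • x := by
      intro i x hx hx0
      have hev : HasEigenvector t (lam i) x := ⟨mem_eigenspace_iff.mpr (heig i x hx), hx0⟩
      rw [hSt, aeval_apply_of_hasEigenvector hev,
        hpeval _ (hasEigenvalue_of_hasEigenvector hev)]
    have hlamne : ∀ i (x : E), x ∈ V i → x ≠ 0 → lam i ≠ 0 := by
      intro i x hx hx0 h0
      have := habs1 i x hx hx0
      rw [h0] at this
      simp at this
    -- S * S = t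
    have hSS : S * S = t := by
      refine LinearMap.ext fun x => ?_
      have hx : x ∈ ⨆ i : ℂ × ℂ, V i := by rw [hsupV]; trivial
      refine Submodule.iSup_induction V (motive := fun y => (S * S) y = t y) hx ?_ (by simp) ?_
      · intro i y hy
        by_cases hy0 : y = 0
        · simp [hy0]
        · rw [Module.End.mul_apply, hSact i y hy hy0, _root_.map_smul, hSact i y hy hy0,
            smul_smul, hsq2 _ (hlamne i y hy hy0), heig i y hy]
      · intro y z hy hz
        rw [map_add, map_add, hy, hz]
    have hWWU : W * W = U := by
      apply Matrix.toEuclideanLin.injective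
      have : toEucAlg N (W * W) = toEucAlg N U := by
        rw [_root_.map_mul, ← hS', ← ht', hSS]
      simpa using this
    -- inner products are preserved by S
    have key : ∀ (i : ℂ × ℂ) (x : E), x ∈ V i → ∀ (j : ℂ × ℂ) (y : E), y ∈ V j →
        ⟪S x, S y⟫ = ⟪x, y⟫ := by
      intro i x hx j y hy
      by_cases hx0 : x = 0
      · simp [hx0]
      by_cases hy0 : y = 0
      · simp [hy0]
      rw [hSact i x hx hx0, hSact j y hy hy0, inner_smul_left, inner_smul_right]
      by_cases hij : i = j
      · subst hij
        rw [← mul_assoc, hsqu _ (habs1 i x hx hx0), one_mul]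
      · have h0 : ⟪x, y⟫ = 0 := horth hij ⟨x, hx⟩ ⟨y, hy⟩
        rw [h0]
        ring
    have hinner_S : ∀ x y : E, ⟪S x, S y⟫ = ⟪x, y⟫ := by
      have step1 : ∀ (i : ℂ × ℂ) (x : E), x ∈ V i → ∀ y : E, ⟪S x, S y⟫ = ⟪x, y⟫ := by
        intro i x hx y
        have hy : y ∈ ⨆ j : ℂ × ℂ, V j := by rw [hsupV]; trivial
        refine Submodule.iSup_induction V (motive := fun y => ⟪S x, S y⟫ = ⟪x, y⟫) hy
          (fun j y hyj => key i x hx j y hyj) (by simp) ?_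
        intro u v hu hv
        rw [map_add, inner_add_right, inner_add_right, hu, hv]
      intro x y
      have hx : x ∈ ⨆ i : ℂ × ℂ, V i := by rw [hsupV]; trivial
      refine Submodule.iSup_induction V (motive := fun x => ⟪S x, S y⟫ = ⟪x, y⟫) hx
        (fun i x hxi => step1 i x hxi y) (by simp) ?_
      intro u v hu hv
      rw [map_add, inner_add_left, inner_add_left, hu, hv]
    have hW1 : Wᴴ * W = 1 := by
      apply Matrix.toEuclideanLin.injective
      refine LinearMap.ext fun x => ?_
      apply ext_inner_right ℂ
      intro v
      have e1 : Matrix.toEuclideanLin (Wᴴ * W) x = (LinearMap.adjoint S) (S x) := by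
        rw [← toEucAlg_apply, _root_.map_mul, Module.End.mul_apply, toEucAlg_apply,
          toEucAlg_apply, Matrix.toEuclideanLin_conjTranspose_eq_adjoint, hS', toEucAlg_apply]
      rw [e1, LinearMap.adjoint_inner_left, hinner_S]
      rw [← toEucAlg_apply, _root_.map_one, Module.End.one_apply]
    have hWt : Wᵀ = W := by
      rw [hW, transpose_aeval, ← hsym]
    exact ⟨W, hW1, by rw [hWt, hWWU]⟩
  · rintro ⟨W, hW, rfl⟩
    have hW2 : W * Wᴴ = 1 := mul_eq_one_comm.mp hW
    have hct : (Wᵀ)ᴴ = (Wᴴ)ᵀ := by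
      ext i j
      simp [conjTranspose_apply]
    have hWt1 : (Wᵀ)ᴴ * Wᵀ = 1 := by
      rw [hct, ← Matrix.transpose_mul, hW2, Matrix.transpose_one]
    constructor
    · calc (W * Wᵀ)ᴴ * (W * Wᵀ) = (Wᵀ)ᴴ * (Wᴴ * W) * Wᵀ := by
            rw [conjTranspose_mul]
            noncomm_ring
        _ = (Wᵀ)ᴴ * Wᵀ := by rw [hW, mul_one]
        _ = 1 := hWt1
    · rw [transpose_mul, transpose_transpose]
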